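/- The set of α ∈ (0,1] whose orbits never synchronize, namely {α ∈ (0,1] : T_α^n(α−1) < 0 and T_α^n(α) < 0 for all n ≥ 1}, is contained in {α ∈ (0,1] : T₁^n(α) ≥ α for all n ≥ 1}, and the latter set has Lebesgue measure zero. -/

import Mathlib

/-- The α-continued fraction map T_α on [α−1, α]. -/
noncomputable def TCF (α x : ℝ) : ℝ := if x = 0 then 0 else |1/x| - ⌊|1/x| + 1 - α⌋

/-- The Gauss map T₁(x) = 1/x − ⌊1/x⌋. -/
noncomputable def gaussMap (x : ℝ) : ℝ := if x = 0 then 0 else Int.fract (1/x)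

lemma gauss_nonneg (x : ℝ) : 0 ≤ gaussMap x := by
  unfold gaussMap; split
  · exact le_refl _
  · exact Int.fract_nonneg _

lemma gauss_lt_one (x : ℝ) : gaussMap x < 1 := by
  unfold gaussMap; split
  · norm_num
  · exact Int.fract_lt_one _

lemma gauss_of_ne (x : ℝ) (h : x ≠ 0) : gaussMap x = Int.fract (1/x) := by
  unfold gaussMap; simp [h]

lemma TCF_neg (α x : ℝ) (h : x ≠ 0) : TCF α (-x) = TCF α x := by
  unfold TCF
  rw [if_neg (neg_ne_zero.mpr h), if_neg h]
  rw [one_div, one_div, inv_neg, abs_neg]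

lemma TCF_formula (α u : ℝ) (hα0 : 0 < α) (hα1 : α < 1) (hu0 : 0 < u) (hu1 : u ≤ 1) :
    TCF α u = gaussMap u - if α ≤ gaussMap u then 1 else 0 := by
  have hune : u ≠ 0 := ne_of_gt hu0
  have h1u : (1:ℝ) ≤ 1/u := by
    rw [le_one_div (by norm_num) hu0]; simpa using hu1
  unfold TCF
  rw [if_neg hune, gauss_of_ne u hune]
  have habs : |1/u| = 1/u := abs_of_pos (by positivity)
  rw [habs]
  have hsplit : (1:ℝ)/u = (⌊1/u⌋ : ℝ) + Int.fract (1/u) :=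
    (Int.floor_add_fract (1/u)).symm
  have hf0 : 0 ≤ Int.fract (1/u) := Int.fract_nonneg _
  have hf1 : Int.fract (1/u) < 1 := Int.fract_lt_one _
  have hfloor : ⌊1/u + 1 - α⌋ = ⌊1/u⌋ + (if α ≤ Int.fract (1/u) then 1 else 0) := by
    have : (1:ℝ)/u + 1 - α = (⌊1/u⌋ : ℝ) + (Int.fract (1/u) + 1 - α) := by
      conv_lhs => rw [hsplit]
      ring
    rw [this, Int.floor_intCast_add]
    congr 1
    by_cases hc : α ≤ Int.fract (1/u)
    · rw [if_pos hc]
      apply Int.floor_eq_iff.mpr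
      constructor
      · push_cast; linarith
      · push_cast; linarith
    · rw [if_neg hc]
      push_neg at hc
      apply Int.floor_eq_iff.mpr
      constructor
      · push_cast; linarith
      · push_cast; linarith
  rw [hfloor]
  push_cast
  split <;> rw [Int.fract] <;> ring

lemma fract_of_Ico (x : ℝ) (h1 : 1 ≤ x) (h2 : x < 2) : Int.fract x = x - 1 := by
  have hf : ⌊x⌋ = 1 := Int.floor_eq_iff.mpr (by constructor <;> push_cast <;> linarith)
  rw [Int.fract, hf]; push_cast; ring

lemma gauss_one_sub_of_lt_half (w : ℝ) (h0 : 0 < w) (h2 : w < 1/2) :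
    gaussMap (1 - w) = w / (1 - w) := by
  have hne : (1:ℝ) - w ≠ 0 := by intro h; nlinarith
  have hpos : (0:ℝ) < 1 - w := by linarith
  rw [gauss_of_ne _ hne]
  have h1 : (1:ℝ) ≤ 1/(1-w) := by
    rw [le_div_iff₀ hpos]; linarith
  have h2' : (1:ℝ)/(1-w) < 2 := by rw [div_lt_iff₀ hpos]; linarith
  rw [fract_of_Ico _ h1 h2']
  field_simp; ring

lemma gauss_div_one_sub (w : ℝ) (h0 : 0 < w) (h2 : w < 1/2) :
    gaussMap (w/(1-w)) = gaussMap w := by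
  have hpos : (0:ℝ) < 1 - w := by linarith
  have hne : w/(1-w) ≠ 0 := by positivity
  rw [gauss_of_ne _ hne, gauss_of_ne _ (ne_of_gt h0)]
  have : (1:ℝ)/(w/(1-w)) = 1/w - ((1:ℤ):ℝ) := by push_cast; field_simp
  rw [this, Int.fract_sub_intCast]

lemma gauss_one_sub_of_half (w : ℝ) (h1 : 1/2 ≤ w) (h2 : w < 1) :
    gaussMap (1 - w) = gaussMap (gaussMap w) := by
  rcases eq_or_lt_of_le h1 with heq | hlt
  · have hg : gaussMap w = 0 := by
      rw [← heq, gauss_of_ne _ (by norm_num)]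
      norm_num
    rw [hg, ← heq]
    norm_num [gaussMap]
  · have h0 : 0 < w := by linarith
    have hw1 : (1:ℝ) < 1/w := by rw [lt_div_iff₀ h0]; linarith
    have hw2 : (1:ℝ)/w < 2 := by rw [div_lt_iff₀ h0]; linarith
    have hgw : gaussMap w = 1/w - 1 := by
      rw [gauss_of_ne _ (ne_of_gt h0), fract_of_Ico _ (le_of_lt hw1) hw2]
    have hgpos : 0 < gaussMap w := by rw [hgw]; linarith
    have hne : (1:ℝ) - w ≠ 0 := by intro h; linarith [h2]
    rw [gauss_of_ne _ hne, hgw, gauss_of_ne _ (by linarith : 1/w - 1 ≠ 0)]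
    have key : (1:ℝ)/(1-w) = 1/(1/w - 1) + ((1:ℤ):ℝ) := by
      push_cast
      rw [div_add' _ _ _ (by intro h; nlinarith : 1/w - (1:ℝ) ≠ 0)]
      rw [div_eq_div_iff hne (by intro h; nlinarith : 1/w - (1:ℝ) ≠ 0)]
      field_simp; ring
    rw [key, Int.fract_add_intCast]

noncomputable def FM (u : ℝ) : ℝ := 1 - gaussMap u

lemma stream (α : ℝ) (hα0 : 0 < α) (hα1 : α < 1) (y : ℝ) (hy0 : 0 < y) (hy1 : y ≤ 1)
    (hyp : ∀ n : ℕ, (TCF α)^[n+1] (-y) < 0) :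
    ∀ n : ℕ, (0 < FM^[n] y ∧ FM^[n] y ≤ 1) ∧ α ≤ gaussMap (FM^[n] y) ∧
      (TCF α)^[n+1] (-y) = -(FM^[n+1] y) := by
  intro n
  induction n with
  | zero =>
    have h2 : (TCF α)^[0+1] (-y) = gaussMap y - if α ≤ gaussMap y then 1 else 0 := by
      rw [Function.iterate_one, TCF_neg α y (ne_of_gt hy0), TCF_formula α y hα0 hα1 hy0 hy1]
    have hneg := hyp 0
    by_cases hc : α ≤ gaussMap y
    · refine ⟨⟨hy0, hy1⟩, by simpa using hc, ?_⟩
      rw [h2, if_pos hc, Function.iterate_one]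
      show gaussMap y - 1 = -(FM y)
      unfold FM; ring
    · exfalso
      rw [h2, if_neg hc] at hneg
      have := gauss_nonneg y
      linarith
  | succ n ih =>
    obtain ⟨⟨hp0, hp1⟩, hcond, heq⟩ := ih
    have hm : FM^[n+1] y = 1 - gaussMap (FM^[n] y) := by
      rw [Function.iterate_succ_apply' FM n y]; rfl
    have h0' : 0 < FM^[n+1] y := by
      rw [hm]; have := gauss_lt_one (FM^[n] y); linarith
    have h1' : FM^[n+1] y ≤ 1 := by
      rw [hm]; have := gauss_nonneg (FM^[n] y); linarith
    have hstep : (TCF α)^[n+1+1] (-y) =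
        gaussMap (FM^[n+1] y) - if α ≤ gaussMap (FM^[n+1] y) then 1 else 0 := by
      rw [Function.iterate_succ_apply' (TCF α) (n+1) (-y), heq,
        TCF_neg α _ (ne_of_gt h0'), TCF_formula α _ hα0 hα1 h0' h1']
    have hneg := hyp (n+1)
    by_cases hc : α ≤ gaussMap (FM^[n+1] y)
    · refine ⟨⟨h0', h1'⟩, hc, ?_⟩
      rw [hstep, if_pos hc, Function.iterate_succ_apply' FM (n+1) y]
      show gaussMap (FM^[n+1] y) - 1 = -(FM (FM^[n+1] y))
      unfold FM; ring
    · exfalso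
      rw [hstep, if_neg hc] at hneg
      have := gauss_nonneg (FM^[n+1] y)
      linarith

lemma block_aux : ∀ (k : ℕ) (g : ℝ), 0 < g → g < 1 → 1/g ≤ k →
    ∃ m : ℕ, gaussMap (FM^[m] (1-g)) = gaussMap (gaussMap g) ∧
      FM^[m+1] (1-g) = 1 - gaussMap (gaussMap g) := by
  intro k
  induction k with
  | zero =>
    intro g h0 h1 hk
    exfalso
    have : (0:ℝ) < 1/g := by positivity
    simp at hk; linarith
  | succ k ih =>
    intro g h0 h1 hk
    by_cases hc : 1/2 ≤ g
    · refine ⟨0, ?_, ?_⟩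
      · simpa using gauss_one_sub_of_half g hc h1
      · rw [Function.iterate_one]
        show 1 - gaussMap (1-g) = _
        rw [gauss_one_sub_of_half g hc h1]
    · push_neg at hc
      have hg'0 : 0 < g/(1-g) := by
        apply div_pos h0; linarith
      have hg'1 : g/(1-g) < 1 := by
        rw [div_lt_one (by linarith)]; linarith
      have e1 : gaussMap (1-g) = g/(1-g) := gauss_one_sub_of_lt_half g h0 hc
      have e2 : gaussMap (g/(1-g)) = gaussMap g := gauss_div_one_sub g h0 hc
      have hk' : 1/(g/(1-g)) ≤ (k:ℝ) := by
        have : (1:ℝ)/(g/(1-g)) = 1/g - 1 := by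
          field_simp
        rw [this]
        push_cast at hk ⊢
        linarith
      obtain ⟨m, hm1, hm2⟩ := ih (g/(1-g)) hg'0 hg'1 hk'
      have hFM : FM (1-g) = 1 - g/(1-g) := by
        show 1 - gaussMap (1-g) = _
        rw [e1]
      refine ⟨m+1, ?_, ?_⟩
      · rw [Function.iterate_succ_apply FM m (1-g), hFM, hm1, e2]
      · rw [Function.iterate_succ_apply FM (m+1) (1-g), hFM, hm2, e2]

lemma block (g : ℝ) (h0 : 0 < g) (h1 : g < 1) :
    ∃ m : ℕ, gaussMap (FM^[m] (1-g)) = gaussMap (gaussMap g) ∧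
      FM^[m+1] (1-g) = 1 - gaussMap (gaussMap g) := by
  obtain ⟨k, hk⟩ := exists_nat_ge (1/g)
  exact block_aux k g h0 h1 hk

def GoodP (α x : ℝ) : Prop :=
  (0 < x ∧ x < 1) ∧ ∀ n : ℕ, α ≤ gaussMap (FM^[n] (1 - x))

lemma goodP_step (α x : ℝ) (hα0 : 0 < α) (h : GoodP α x) :
    α ≤ gaussMap (gaussMap x) ∧ GoodP α (gaussMap (gaussMap x)) := by
  obtain ⟨⟨h0, h1⟩, hgood⟩ := h
  obtain ⟨m, hm1, hm2⟩ := block x h0 h1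
  have hle : α ≤ gaussMap (gaussMap x) := by rw [← hm1]; exact hgood m
  refine ⟨hle, ⟨⟨lt_of_lt_of_le hα0 hle, gauss_lt_one _⟩, ?_⟩⟩
  intro n
  have : FM^[n] (1 - gaussMap (gaussMap x)) = FM^[n + (m+1)] (1-x) := by
    rw [← hm2, ← Function.iterate_add_apply]
  rw [this]; exact hgood _

lemma part1 (α : ℝ) (hα : α ∈ Set.Ioc (0:ℝ) 1)
    (hyp : ∀ n : ℕ, 1 ≤ n → (TCF α)^[n] (α-1) < 0 ∧ (TCF α)^[n] α < 0) :
    ∀ n : ℕ, 1 ≤ n → α ≤ gaussMap^[n] α := by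
  obtain ⟨hα0, hα1'⟩ := hα
  have hα1 : α < 1 := by
    rcases lt_or_eq_of_le hα1' with h | h
    · exact h
    · exfalso
      have h1 := (hyp 1 le_rfl).1
      rw [← h] at h1
      norm_num [TCF] at h1
  have hypα : ∀ n : ℕ, (TCF α)^[n+1] (-α) < 0 := by
    intro n
    have h := (hyp (n+1) (by omega)).2
    rw [Function.iterate_succ_apply, TCF_neg α α (ne_of_gt hα0),
      ← Function.iterate_succ_apply]
    exact h
  have Sα := stream α hα0 hα1 α hα0 hα1' hypα
  have hypβ : ∀ n : ℕ, (TCF α)^[n+1] (-(1-α)) < 0 := by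
    intro n
    have h := (hyp (n+1) (by omega)).1
    have he : -(1-α) = α - 1 := by ring
    rw [he]; exact h
  have Sβ := stream α hα0 hα1 (1-α) (by linarith) (by linarith) hypβ
  have hg1 : α ≤ gaussMap α := by
    have := (Sα 0).2.1
    simpa using this
  have base0 : GoodP α α := by
    exact ⟨⟨hα0, hα1⟩, fun n => (Sβ n).2.1⟩
  have base1 : GoodP α (gaussMap α) := by
    refine ⟨⟨lt_of_lt_of_le hα0 hg1, gauss_lt_one _⟩, fun n => ?_⟩
    have he : FM^[n] (1 - gaussMap α) = FM^[n+1] α := by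
      rw [Function.iterate_succ_apply FM n α]; rfl
    rw [he]; exact (Sα (n+1)).2.1
  have hg2 : ∀ j : ℕ, gaussMap^[j+1+1] α = gaussMap (gaussMap (gaussMap^[j] α)) := by
    intro j
    rw [Function.iterate_succ_apply' gaussMap (j+1) α,
      Function.iterate_succ_apply' gaussMap j α]
  have Pall : ∀ m : ℕ, GoodP α (gaussMap^[m] α) ∧ GoodP α (gaussMap^[m+1] α) := by
    intro m
    induction m with
    | zero => exact ⟨by simpa using base0, by simpa using base1⟩
    | succ m ih =>
      refine ⟨ih.2, ?_⟩
      rw [hg2 m]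
      exact (goodP_step α _ hα0 ih.1).2
  intro n hn
  match n, hn with
  | 1, _ => simpa using hg1
  | (j+2), _ =>
    have : gaussMap^[j+1+1] α = gaussMap (gaussMap (gaussMap^[j] α)) := hg2 j
    rw [show j+2 = j+1+1 from rfl, this]
    exact (goodP_step α _ hα0 (Pall j).1).1

open MeasureTheory

lemma gauss_measurable : Measurable gaussMap := by
  unfold gaussMap
  refine Measurable.ite ?_ measurable_const ?_
  · simpa [Set.setOf_eq_eq_singleton] using (MeasurableSet.singleton (0:ℝ))
  · exact measurable_fract.comp (measurable_const.div measurable_id)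

lemma lintegral_image_1d {s : Set ℝ} {f f' : ℝ → ℝ} (hs : MeasurableSet s)
    (hf' : ∀ x ∈ s, HasDerivWithinAt f (f' x) s x) (hf : Set.InjOn f s) (g : ℝ → ENNReal) :
    ∫⁻ x in f '' s, g x = ∫⁻ x in s, ENNReal.ofReal |f' x| * g (f x) := by
  simpa only [ContinuousLinearMap.det_toSpanSingleton] using
    lintegral_image_eq_lintegral_abs_det_fderiv_mul volume hs
      (fun x hx => (hf' x hx).hasFDerivWithinAt) hf g

noncomputable def beta (d : ℕ) : ℝ := ((d:ℝ)+2)⁻¹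

def CSet (d n : ℕ) : Set ℝ := {x : ℝ | ∀ i < n, gaussMap^[i] x ∈ Set.Icc (beta d) 1}

lemma CSet_meas (d n : ℕ) : MeasurableSet (CSet d n) := by
  have : CSet d n = ⋂ (i : ℕ), ⋂ (_ : i < n), (gaussMap^[i]) ⁻¹' Set.Icc (beta d) 1 := by
    ext x; simp [CSet]
  rw [this]
  exact MeasurableSet.iInter fun i => MeasurableSet.iInter fun _ =>
    (gauss_measurable.iterate i) measurableSet_Icc

lemma beta_pos (d : ℕ) : 0 < beta d := by unfold beta; positivity

lemma CSet_subset (d n : ℕ) :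
    CSet d (n+1) ⊆
      (⋃ k ∈ Finset.range (d+1), (fun t : ℝ => ((k:ℝ)+1+t)⁻¹) '' (CSet d n ∩ Set.Icc 0 1))
        ∪ {beta d} := by
  intro x hx
  have hx0 : x ∈ Set.Icc (beta d) 1 := by simpa using hx 0 (by omega)
  by_cases hxb : x = beta d
  · right; simp [hxb]
  · left
    have hb : 0 < beta d := beta_pos d
    have hx0' : beta d < x := lt_of_le_of_ne hx0.1 (Ne.symm hxb)
    have hxpos : 0 < x := lt_trans hb hx0'
    have h1x : 1 ≤ 1/x := by rw [le_div_iff₀ hxpos]; simpa using hx0.2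
    have h2x : 1/x < (d:ℝ)+2 := by
      rw [div_lt_iff₀ hxpos]
      have h1 : ((d:ℝ)+2) * beta d = 1 := by
        unfold beta; field_simp
      calc (1:ℝ) = ((d:ℝ)+2) * beta d := h1.symm
        _ < ((d:ℝ)+2) * x := by
            apply mul_lt_mul_of_pos_left hx0' (by positivity)
    have hk1 : 1 ≤ ⌊1/x⌋ := by
      apply Int.le_floor.mpr; exact_mod_cast h1x
    have hk2 : ⌊1/x⌋ < (d:ℤ)+2 := by
      apply Int.floor_lt.mpr; push_cast; exact h2x
    set k : ℕ := ⌊1/x⌋.toNat - 1 with hkdef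
    have hkk : (k:ℝ) + 1 = ((⌊1/x⌋ : ℤ) : ℝ) := by
      have h1 : ((k + 1 : ℕ) : ℤ) = ⌊1/x⌋ := by omega
      exact_mod_cast congrArg (fun z : ℤ => (z:ℝ)) h1
    have hgx : gaussMap x = Int.fract (1/x) := gauss_of_ne x (ne_of_gt hxpos)
    refine Set.mem_biUnion (show k ∈ Finset.range (d+1) by
      simp only [Finset.mem_range]; omega) ?_
    refine ⟨gaussMap x, ⟨?_, ?_⟩, ?_⟩
    · intro i hi
      rw [← Function.iterate_succ_apply]
      exact hx (i+1) (by omega)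
    · exact ⟨gauss_nonneg x, le_of_lt (gauss_lt_one x)⟩
    · show ((k:ℝ) + 1 + gaussMap x)⁻¹ = x
      rw [hgx, hkk, Int.floor_add_fract]
      rw [one_div, inv_inv]

lemma dens_meas : Measurable (fun x : ℝ => ENNReal.ofReal ((1+x)⁻¹)) :=
  ENNReal.measurable_ofReal.comp ((measurable_const.add measurable_id).inv)

lemma lintegral_biUnion_finset_le {ι : Type*} (s : Finset ι) (t : ι → Set ℝ) (f : ℝ → ENNReal) :
    ∫⁻ x in ⋃ i ∈ s, t i, f x ≤ ∑ i ∈ s, ∫⁻ x in t i, f x := by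
  classical
  induction s using Finset.induction with
  | empty => simp
  | insert _ _ h ih =>
    rw [Finset.set_biUnion_insert, Finset.sum_insert h]
    exact le_trans (lintegral_union_le _ _ _) (add_le_add le_rfl ih)

lemma tel_sum (d : ℕ) (t : ℝ) (ht : 0 ≤ t) :
    ∑ k ∈ Finset.range (d+1), ((((k:ℝ)+1+t) * ((k:ℝ)+2+t))⁻¹)
      = (1+t)⁻¹ - ((d:ℝ)+2+t)⁻¹ := by
  have h : ∀ k ∈ Finset.range (d+1),
      ((((k:ℝ)+1+t) * ((k:ℝ)+2+t))⁻¹)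
        = ((k:ℝ)+1+t)⁻¹ - (((k:ℝ)+1)+1+t)⁻¹ := by
    intro k _
    have ha : (0:ℝ) < (k:ℝ)+1+t := by positivity
    have hb : (0:ℝ) < (k:ℝ)+2+t := by positivity
    rw [eq_sub_iff_add_eq]
    field_simp
    ring
  rw [Finset.sum_congr rfl h]
  have := Finset.sum_range_sub' (fun k : ℕ => ((k:ℝ)+1+t)⁻¹) (d+1)
  push_cast at this ⊢
  convert this using 2 <;> push_cast <;> ring

lemma key_step (d n : ℕ) :
    ∫⁻ x in CSet d (n+1), ENNReal.ofReal ((1+x)⁻¹) ≤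
      ENNReal.ofReal (((d:ℝ)+2)/((d:ℝ)+3)) * ∫⁻ x in CSet d n, ENNReal.ofReal ((1+x)⁻¹) := by
  set s : Set ℝ := CSet d n ∩ Set.Icc 0 1 with hs
  have hsmeas : MeasurableSet s := (CSet_meas d n).inter measurableSet_Icc
  have hcov : ∀ k : ℕ, ∫⁻ x in (fun t : ℝ => ((k:ℝ)+1+t)⁻¹) '' s, ENNReal.ofReal ((1+x)⁻¹)
      = ∫⁻ t in s, ENNReal.ofReal |(-1) / (((k:ℝ)+1+t)^2)|
          * ENNReal.ofReal ((1+((k:ℝ)+1+t)⁻¹)⁻¹) := by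
    intro k
    apply lintegral_image_1d (f' := fun t => (-1) / (((k:ℝ)+1+t)^2)) hsmeas
    · intro t ht
      have h0 : ((k:ℝ)+1+t) ≠ 0 := by have := ht.2.1; positivity
      exact (((hasDerivAt_id t).const_add ((k:ℝ)+1)).inv h0).hasDerivWithinAt
    · intro a ha b hb hab
      have := inv_injective hab
      linarith [this]
  have hptwise : ∀ t ∈ s,
      ∑ k ∈ Finset.range (d+1), ENNReal.ofReal |(-1) / (((k:ℝ)+1+t)^2)|
          * ENNReal.ofReal ((1+((k:ℝ)+1+t)⁻¹)⁻¹)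
        ≤ ENNReal.ofReal (((d:ℝ)+2)/((d:ℝ)+3)) * ENNReal.ofReal ((1+t)⁻¹) := by
    intro t ht
    have ht0 : (0:ℝ) ≤ t := ht.2.1
    have hterm : ∀ k ∈ Finset.range (d+1),
        ENNReal.ofReal |(-1) / (((k:ℝ)+1+t)^2)| * ENNReal.ofReal ((1+((k:ℝ)+1+t)⁻¹)⁻¹)
          = ENNReal.ofReal ((((k:ℝ)+1+t) * ((k:ℝ)+2+t))⁻¹) := by
      intro k _
      have ha : (0:ℝ) < (k:ℝ)+1+t := by positivity
      rw [← ENNReal.ofReal_mul (by positivity)]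
      congr 1
      rw [abs_div, abs_neg, abs_one, abs_of_pos (by positivity : (0:ℝ) < ((k:ℝ)+1+t)^2)]
      field_simp
      ring
    rw [Finset.sum_congr rfl hterm,
      ← ENNReal.ofReal_sum_of_nonneg (fun k _ => by positivity),
      tel_sum d t ht0, ← ENNReal.ofReal_mul (by positivity)]
    apply ENNReal.ofReal_le_ofReal
    have ha : (0:ℝ) < 1+t := by linarith
    have hb : (0:ℝ) < (d:ℝ)+2+t := by positivity
    have hc : (0:ℝ) < (d:ℝ)+3 := by positivity
    have lhs_eq : (1+t)⁻¹ - ((d:ℝ)+2+t)⁻¹ = ((d:ℝ)+1) / ((1+t)*((d:ℝ)+2+t)) := by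
      field_simp
      ring
    have rhs_eq : ((d:ℝ)+2)/((d:ℝ)+3) * (1+t)⁻¹ = ((d:ℝ)+2) / (((d:ℝ)+3)*(1+t)) := by
      field_simp
    rw [lhs_eq, rhs_eq, div_le_div_iff₀ (by positivity) (by positivity)]
    have hx : (0:ℝ) ≤ (1+t) * ((d:ℝ)+2) * t := by positivity
    nlinarith [hx, ha]
  calc ∫⁻ x in CSet d (n+1), ENNReal.ofReal ((1+x)⁻¹)
      ≤ ∫⁻ x in (⋃ k ∈ Finset.range (d+1),
            (fun t : ℝ => ((k:ℝ)+1+t)⁻¹) '' s) ∪ {beta d}, ENNReal.ofReal ((1+x)⁻¹) :=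
        lintegral_mono_set (CSet_subset d n)
    _ ≤ (∫⁻ x in (⋃ k ∈ Finset.range (d+1),
            (fun t : ℝ => ((k:ℝ)+1+t)⁻¹) '' s), ENNReal.ofReal ((1+x)⁻¹))
          + ∫⁻ x in ({beta d} : Set ℝ), ENNReal.ofReal ((1+x)⁻¹) :=
        lintegral_union_le _ _ _
    _ = ∫⁻ x in (⋃ k ∈ Finset.range (d+1),
            (fun t : ℝ => ((k:ℝ)+1+t)⁻¹) '' s), ENNReal.ofReal ((1+x)⁻¹) := by
        rw [setLIntegral_measure_zero _ _ Real.volume_singleton, add_zero]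
    _ ≤ ∑ k ∈ Finset.range (d+1), ∫⁻ x in (fun t : ℝ => ((k:ℝ)+1+t)⁻¹) '' s,
          ENNReal.ofReal ((1+x)⁻¹) :=
        lintegral_biUnion_finset_le _ _ _
    _ = ∑ k ∈ Finset.range (d+1), ∫⁻ t in s, ENNReal.ofReal |(-1) / (((k:ℝ)+1+t)^2)|
          * ENNReal.ofReal ((1+((k:ℝ)+1+t)⁻¹)⁻¹) := by
        exact Finset.sum_congr rfl (fun k _ => hcov k)
    _ = ∫⁻ t in s, ∑ k ∈ Finset.range (d+1), ENNReal.ofReal |(-1) / (((k:ℝ)+1+t)^2)|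
          * ENNReal.ofReal ((1+((k:ℝ)+1+t)⁻¹)⁻¹) := by
        rw [lintegral_finset_sum']
        intro k _
        exact ((ENNReal.measurable_ofReal.comp
            ((measurable_const.div ((measurable_const.add measurable_id).pow_const 2)).abs)).mul
          (ENNReal.measurable_ofReal.comp
            ((measurable_const.add ((measurable_const.add measurable_id).inv)).inv))).aemeasurable
    _ ≤ ∫⁻ t in s, ENNReal.ofReal (((d:ℝ)+2)/((d:ℝ)+3)) * ENNReal.ofReal ((1+t)⁻¹) :=
        setLIntegral_mono (measurable_const.mul dens_meas) hptwise
    _ = ENNReal.ofReal (((d:ℝ)+2)/((d:ℝ)+3)) * ∫⁻ t in s, ENNReal.ofReal ((1+t)⁻¹) :=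
        lintegral_const_mul _ dens_meas
    _ ≤ ENNReal.ofReal (((d:ℝ)+2)/((d:ℝ)+3)) * ∫⁻ x in CSet d n, ENNReal.ofReal ((1+x)⁻¹) :=
        mul_le_mul_right (lintegral_mono_set Set.inter_subset_left) _

lemma CSet_one_bound (d : ℕ) : ∫⁻ x in CSet d 1, ENNReal.ofReal ((1+x)⁻¹) ≤ 1 := by
  have hsub : CSet d 1 ⊆ Set.Icc 0 1 := by
    intro x hx
    have h := hx 0 (by omega)
    simp only [Function.iterate_zero_apply] at h
    exact ⟨le_trans (beta_pos d).le h.1, h.2⟩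
  calc ∫⁻ x in CSet d 1, ENNReal.ofReal ((1+x)⁻¹)
      ≤ ∫⁻ _ in CSet d 1, (1 : ENNReal) := by
        apply setLIntegral_mono measurable_const
        intro x hx
        have h0 : (0:ℝ) ≤ x := (hsub hx).1
        calc ENNReal.ofReal ((1+x)⁻¹) ≤ ENNReal.ofReal 1 :=
              ENNReal.ofReal_le_ofReal (by
                rw [inv_le_one_iff₀]; right; linarith)
          _ = 1 := ENNReal.ofReal_one
    _ = volume (CSet d 1) := setLIntegral_one _
    _ ≤ volume (Set.Icc (0:ℝ) 1) := measure_mono hsub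
    _ = 1 := by rw [Real.volume_Icc]; norm_num

lemma decay (d : ℕ) : ∀ n : ℕ, ∫⁻ x in CSet d (n+1), ENNReal.ofReal ((1+x)⁻¹) ≤
    (ENNReal.ofReal (((d:ℝ)+2)/((d:ℝ)+3)))^n := by
  intro n
  induction n with
  | zero => simpa using CSet_one_bound d
  | succ n ih =>
    calc ∫⁻ x in CSet d (n+1+1), ENNReal.ofReal ((1+x)⁻¹)
        ≤ ENNReal.ofReal (((d:ℝ)+2)/((d:ℝ)+3)) *
            ∫⁻ x in CSet d (n+1), ENNReal.ofReal ((1+x)⁻¹) := key_step d (n+1)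
      _ ≤ ENNReal.ofReal (((d:ℝ)+2)/((d:ℝ)+3)) *
            (ENNReal.ofReal (((d:ℝ)+2)/((d:ℝ)+3)))^n := mul_le_mul_right ih _
      _ = (ENNReal.ofReal (((d:ℝ)+2)/((d:ℝ)+3)))^(n+1) := (pow_succ' _ _).symm

def SD (d : ℕ) : Set ℝ := {x : ℝ | ∀ i : ℕ, gaussMap^[i] x ∈ Set.Icc (beta d) 1}

lemma SD_null (d : ℕ) : volume (SD d) = 0 := by
  set ρ : ENNReal := ENNReal.ofReal (((d:ℝ)+2)/((d:ℝ)+3)) with hρ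
  have hsub : ∀ n : ℕ, SD d ⊆ CSet d (n+1) := fun n x hx i _ => hx i
  have hbound : ∀ n : ℕ, ENNReal.ofReal (1/2) * volume (SD d) ≤ ρ^n := by
    intro n
    calc ENNReal.ofReal (1/2) * volume (SD d)
        ≤ ENNReal.ofReal (1/2) * volume (CSet d (n+1)) :=
          mul_le_mul_right (measure_mono (hsub n)) _
      _ = ∫⁻ _ in CSet d (n+1), ENNReal.ofReal (1/2) := (setLIntegral_const _ _).symm
      _ ≤ ∫⁻ x in CSet d (n+1), ENNReal.ofReal ((1+x)⁻¹) := by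
          apply setLIntegral_mono dens_meas
          intro x hx
          have h := hx 0 (by omega)
          simp only [Function.iterate_zero_apply] at h
          apply ENNReal.ofReal_le_ofReal
          rw [inv_eq_one_div, div_le_div_iff₀ (by norm_num) (by
            have := le_trans (beta_pos d).le h.1; linarith)]
          linarith [h.2]
      _ ≤ ρ^n := decay d n
  have hc0 : (ENNReal.ofReal (1/2)) ≠ 0 := by
    simp [ENNReal.ofReal_eq_zero]
  have hbound' : ∀ n : ℕ, volume (SD d) ≤ (ENNReal.ofReal (1/2))⁻¹ * ρ^n := by
    intro n
    calc volume (SD d)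
        = (ENNReal.ofReal (1/2))⁻¹ * (ENNReal.ofReal (1/2) * volume (SD d)) := by
          rw [← mul_assoc, ENNReal.inv_mul_cancel hc0 (by simp), one_mul]
      _ ≤ (ENNReal.ofReal (1/2))⁻¹ * ρ^n := mul_le_mul_right (hbound n) _
  have hρlt : ρ < 1 := by
    rw [hρ]
    apply ENNReal.ofReal_lt_one.mpr
    rw [div_lt_one (by positivity)]
    linarith
  have htend : Filter.Tendsto (fun n : ℕ => (ENNReal.ofReal (1/2))⁻¹ * ρ^n)
      Filter.atTop (nhds 0) := by
    have h1 := ENNReal.tendsto_pow_atTop_nhds_zero_of_lt_one hρlt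
    have h2 := ENNReal.Tendsto.const_mul (a := (ENNReal.ofReal (1/2))⁻¹) h1
      (Or.inr (by simp [hc0]))
    simpa using h2
  have := ge_of_tendsto' htend hbound'
  exact le_antisymm (by simpa using this) (zero_le')

lemma part2 : volume {α : ℝ | α ∈ Set.Ioc (0:ℝ) 1 ∧
    ∀ n : ℕ, 1 ≤ n → α ≤ gaussMap^[n] α} = 0 := by
  have hU : volume (⋃ d : ℕ, SD d) = 0 := measure_iUnion_null SD_null
  apply measure_mono_null ?_ hU
  rintro α ⟨⟨hα0, hα1⟩, hall⟩
  obtain ⟨d, hd⟩ := exists_nat_ge (1/α)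
  have hpos : (0:ℝ) < (d:ℝ)+2 := by positivity
  have hβ : beta d ≤ α := by
    unfold beta
    have h1 : 1/α ≤ (d:ℝ)+2 := by linarith
    have h2 : 1 ≤ ((d:ℝ)+2) * α := by
      rw [div_le_iff₀ hα0] at h1; linarith
    rw [inv_eq_one_div, div_le_iff₀ hpos]
    linarith
  refine Set.mem_iUnion.mpr ⟨d, fun i => ?_⟩
  match i with
  | 0 => simpa using ⟨hβ, hα1⟩
  | (j+1) =>
    constructor
    · exact le_trans hβ (hall (j+1) (by omega))
    · rw [Function.iterate_succ_apply']
      exact le_of_lt (gauss_lt_one _)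

/-- The set of non-synchronizing α ∈ (0,1] (both orbits of α−1 and α stay negative)
is contained in {α ∈ (0,1] : T₁ⁿ(α) ≥ α for all n ≥ 1}, and the latter set has
Lebesgue measure zero. -/
theorem non_synchronizing_null :
    {α : ℝ | α ∈ Set.Ioc (0:ℝ) 1 ∧
        ∀ n : ℕ, 1 ≤ n → (TCF α)^[n] (α - 1) < 0 ∧ (TCF α)^[n] α < 0}
      ⊆ {α : ℝ | α ∈ Set.Ioc (0:ℝ) 1 ∧ ∀ n : ℕ, 1 ≤ n → α ≤ gaussMap^[n] α} ∧
    MeasureTheory.volume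
      {α : ℝ | α ∈ Set.Ioc (0:ℝ) 1 ∧ ∀ n : ℕ, 1 ≤ n → α ≤ gaussMap^[n] α} = 0 := by
  constructor
  · intro α hα
    exact ⟨hα.1, part1 α hα.1 hα.2⟩
  · exact part2
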